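/- Let (Γ, ψ) be an H-asymptotic couple with Γ divisible, let Γ_0 be a divisible subgroup of Γ, and let c_1, …, c_m ∈ Γ ∖ Γ_0. Set Γ_1 := Γ_0 + ℚc_1 + ⋯ + ℚc_m. Then the set ψ(Γ_1 ∖ {0}) ∖ ψ(Γ_0 ∖ {0}) has at most m elements. -/

import Mathlib

section Aux

variable {Γ : Type*} [AddCommGroup Γ] [LinearOrder Γ] [IsOrderedAddMonoid Γ] [Module ℚ Γ] (ψ : Γ → Γ)
variable (hAC1 : ∀ α β : Γ, α ≠ 0 → β ≠ 0 → α + β ≠ 0 → min (ψ α) (ψ β) ≤ ψ (α + β))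
variable (hAC2 : ∀ α : Γ, α ≠ 0 → ∀ k : ℤ, k ≠ 0 → ψ (k • α) = ψ α)

include hAC2 in
/-- ψ is invariant under nonzero rational scaling. -/
lemma psi_qsmul_aux (q : ℚ) (hq : q ≠ 0) (x : Γ) (hx : x ≠ 0) : ψ (q • x) = ψ x := by
  have hqx : q • x ≠ 0 := by
    intro h
    apply hx
    have := congrArg (fun y => q⁻¹ • y) h
    simpa [inv_smul_smul₀ hq] using this
  have key : (q.den : ℤ) • (q • x) = (q.num : ℤ) • x := by
    rw [← Int.cast_smul_eq_zsmul ℚ, ← Int.cast_smul_eq_zsmul ℚ (q.num), smul_smul]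
    norm_cast
    rw [Rat.den_mul_eq_num]
    exact Int.cast_smul_eq_zsmul ℚ _ _
  have h1 : ψ ((q.den : ℤ) • (q • x)) = ψ (q • x) :=
    hAC2 (q • x) hqx (q.den : ℤ) (by exact_mod_cast q.den_ne_zero)
  have h2 : ψ ((q.num : ℤ) • x) = ψ x := hAC2 x hx q.num (Rat.num_ne_zero.2 hq)
  rw [← h1, key, h2]

include hAC1 hAC2 in
/-- Ultrametric-type equality: if ψ α < ψ β then ψ (α - β) = ψ α. -/
lemma psi_sub_aux {α β : Γ} (hα : α ≠ 0) (hβ : β ≠ 0) (hne : α ≠ β)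
    (hlt : ψ α < ψ β) : ψ (α - β) = ψ α := by
  have hδ : α - β ≠ 0 := sub_ne_zero.2 hne
  have hnegβ : ψ (-β) = ψ β := by
    have := hAC2 β hβ (-1) (by norm_num)
    simpa using this
  have h2 : ψ α ≤ ψ (α - β) := by
    have := hAC1 α (-β) hα (neg_ne_zero.2 hβ) (by simpa [sub_eq_add_neg] using hδ)
    rw [hnegβ, min_eq_left hlt.le] at this
    simpa [sub_eq_add_neg] using this
  have h1 : min (ψ (α - β)) (ψ β) ≤ ψ α := by
    have := hAC1 (α - β) β hδ hβ (by simpa using hα)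
    simpa using this
  rcases le_or_gt (ψ (α - β)) (ψ α) with h | h
  · exact le_antisymm h h2
  · exact absurd h1 (by simp [not_le, h, hlt])

include hAC1 hAC2 in
/-- One-step extension: adjoining one element adds at most one new ψ-value. -/
lemma psi_step_aux (Γ' : Submodule ℚ Γ) (a : Γ) :
    ∃ v : Γ, ψ '' {x | x ∈ Γ' ⊔ Submodule.span ℚ {a} ∧ x ≠ 0} ⊆
      insert v (ψ '' {x | x ∈ Γ' ∧ x ≠ 0}) := by
  by_cases ha : a ∈ Γ'
  · refine ⟨0, ?_⟩
    have hsup : Γ' ⊔ Submodule.span ℚ {a} = Γ' :=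
      sup_eq_left.2 (Submodule.span_le.2 (by simpa using ha))
    rw [hsup]
    exact Set.subset_insert _ _
  · have hcoset_ne : ∀ γ ∈ Γ', γ + a ≠ 0 := by
      intro γ hγ h
      exact ha ((eq_neg_of_add_eq_zero_right h) ▸ neg_mem hγ)
    -- uniqueness of values ψ (γ + a) outside ψ '' N(Γ')
    have huniq : ∀ γ₁ ∈ Γ', ∀ γ₂ ∈ Γ',
        ψ (γ₁ + a) ∉ ψ '' {x | x ∈ Γ' ∧ x ≠ 0} →
        ψ (γ₂ + a) ∉ ψ '' {x | x ∈ Γ' ∧ x ≠ 0} →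
        ψ (γ₁ + a) = ψ (γ₂ + a) := by
      have key : ∀ γ₁ ∈ Γ', ∀ γ₂ ∈ Γ', ψ (γ₁ + a) < ψ (γ₂ + a) →
          ψ (γ₁ + a) ∈ ψ '' {x | x ∈ Γ' ∧ x ≠ 0} := by
        intro γ₁ h₁ γ₂ h₂ hlt
        have hne : γ₁ + a ≠ γ₂ + a := by
          intro h; rw [h] at hlt; exact lt_irrefl _ hlt
        have heq := psi_sub_aux ψ hAC1 hAC2 (hcoset_ne γ₁ h₁) (hcoset_ne γ₂ h₂) hne hlt
        have hmem : (γ₁ + a) - (γ₂ + a) ∈ Γ' := by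
          have : (γ₁ + a) - (γ₂ + a) = γ₁ - γ₂ := by abel
          rw [this]; exact sub_mem h₁ h₂
        exact ⟨(γ₁ + a) - (γ₂ + a), ⟨hmem, sub_ne_zero.2 hne⟩, heq⟩
      intro γ₁ h₁ γ₂ h₂ hout₁ hout₂
      rcases lt_trichotomy (ψ (γ₁ + a)) (ψ (γ₂ + a)) with h | h | h
      · exact absurd (key γ₁ h₁ γ₂ h₂ h) hout₁
      · exact h
      · exact absurd (key γ₂ h₂ γ₁ h₁ h) hout₂
    -- choose the new value if it exists
    by_cases hE : ∃ γ ∈ Γ', ψ (γ + a) ∉ ψ '' {x | x ∈ Γ' ∧ x ≠ 0}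
    case pos =>
      obtain ⟨γ₀, hγ₀, hout₀⟩ := hE
      refine ⟨ψ (γ₀ + a), ?_⟩
      rintro y ⟨x, ⟨hx, hx0⟩, rfl⟩
      obtain ⟨γ, hγ, s, hs, rfl⟩ := Submodule.mem_sup.1 hx
      obtain ⟨q, rfl⟩ := Submodule.mem_span_singleton.1 hs
      by_cases hq : q = 0
      · subst hq
        exact Set.mem_insert_iff.2 (Or.inr ⟨γ + (0:ℚ) • a, ⟨by simpa using hγ, hx0⟩, rfl⟩)
      · have hrw : q⁻¹ • (γ + q • a) = q⁻¹ • γ + a := by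
          rw [smul_add, smul_smul, inv_mul_cancel₀ hq, one_smul]
        have hψ : ψ (γ + q • a) = ψ (q⁻¹ • γ + a) := by
          rw [← psi_qsmul_aux ψ hAC2 q⁻¹ (inv_ne_zero hq) _ hx0, hrw]
        have hγ' : q⁻¹ • γ ∈ Γ' := Submodule.smul_mem _ _ hγ
        by_cases hin : ψ (q⁻¹ • γ + a) ∈ ψ '' {x | x ∈ Γ' ∧ x ≠ 0}
        · exact Set.mem_insert_iff.2 (Or.inr (hψ ▸ hin))
        · exact Set.mem_insert_iff.2 (Or.inl (by
            rw [hψ]; exact huniq _ hγ' _ hγ₀ hin hout₀))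
    case neg =>
      push_neg at hE
      refine ⟨0, ?_⟩
      rintro y ⟨x, ⟨hx, hx0⟩, rfl⟩
      obtain ⟨γ, hγ, s, hs, rfl⟩ := Submodule.mem_sup.1 hx
      obtain ⟨q, rfl⟩ := Submodule.mem_span_singleton.1 hs
      by_cases hq : q = 0
      · subst hq
        exact Set.mem_insert_iff.2 (Or.inr ⟨γ + (0:ℚ) • a, ⟨by simpa using hγ, hx0⟩, rfl⟩)
      · have hrw : q⁻¹ • (γ + q • a) = q⁻¹ • γ + a := by
          rw [smul_add, smul_smul, inv_mul_cancel₀ hq, one_smul]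
        have hψ : ψ (γ + q • a) = ψ (q⁻¹ • γ + a) := by
          rw [← psi_qsmul_aux ψ hAC2 q⁻¹ (inv_ne_zero hq) _ hx0, hrw]
        exact Set.mem_insert_iff.2 (Or.inr (hψ ▸ hE _ (Submodule.smul_mem _ _ hγ)))

include hAC1 hAC2 in
lemma psi_ind_aux (Γ0 : Submodule ℚ Γ) :
    ∀ m : ℕ, ∀ c : Fin m → Γ, ∃ v : Fin m → Γ,
      ψ '' {x | x ∈ Γ0 ⊔ Submodule.span ℚ (Set.range c) ∧ x ≠ 0} ⊆
        (ψ '' {x | x ∈ Γ0 ∧ x ≠ 0}) ∪ Set.range v := by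
  intro m
  induction m with
  | zero =>
    intro c
    refine ⟨Fin.elim0, ?_⟩
    have : Set.range c = ∅ := Set.range_eq_empty c
    rw [this, Submodule.span_empty, sup_bot_eq]
    exact fun y hy => Or.inl hy
  | succ n ih =>
    intro c
    obtain ⟨v, hv⟩ := ih (Fin.tail c)
    obtain ⟨v₀, hv₀⟩ := psi_step_aux ψ hAC1 hAC2
      (Γ0 ⊔ Submodule.span ℚ (Set.range (Fin.tail c))) (c 0)
    refine ⟨Fin.cons v₀ v, ?_⟩
    have hrange : Set.range c = insert (c 0) (Set.range (Fin.tail c)) :=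
      Fin.range_fin_succ c
    have hsup : Γ0 ⊔ Submodule.span ℚ (Set.range c) =
        (Γ0 ⊔ Submodule.span ℚ (Set.range (Fin.tail c))) ⊔ Submodule.span ℚ {c 0} := by
      rw [hrange, Submodule.span_insert]
      rw [sup_assoc, sup_comm (Submodule.span ℚ {c 0})]
    rw [hsup]
    intro y hy
    rcases hv₀ hy with h | h
    · right
      exact ⟨0, by simpa using h.symm⟩
    · rcases hv h with h' | h'
      · exact Or.inl h'
      · obtain ⟨i, hi⟩ := h'
        exact Or.inr ⟨i.succ, by simpa using hi⟩

end Aux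

/-- Let (Γ, ψ) be an H-asymptotic couple with Γ divisible (equivalently, a
ℚ-vector space), Γ_0 a divisible subgroup (= ℚ-submodule), and
c_1, …, c_m ∈ Γ ∖ Γ_0.  Then ψ((Γ_0 + ℚc_1 + ⋯ + ℚc_m) ∖ {0}) ∖ ψ(Γ_0 ∖ {0})
has at most m elements. -/
theorem finite_psi_extension
    {Γ : Type*} [AddCommGroup Γ] [LinearOrder Γ] [IsOrderedAddMonoid Γ] [Module ℚ Γ]
    (ψ : Γ → Γ)
    (hAC1 : ∀ α β : Γ, α ≠ 0 → β ≠ 0 → α + β ≠ 0 → min (ψ α) (ψ β) ≤ ψ (α + β))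
    (hAC2 : ∀ α : Γ, α ≠ 0 → ∀ k : ℤ, k ≠ 0 → ψ (k • α) = ψ α)
    (hAC3 : ∀ α β : Γ, 0 < α → β ≠ 0 → ψ β < α + ψ α)
    (hHC : ∀ α β : Γ, 0 < α → α ≤ β → ψ β ≤ ψ α)
    (Γ0 : Submodule ℚ Γ) (m : ℕ) (c : Fin m → Γ) (hc : ∀ i, c i ∉ Γ0) :
    (ψ '' {x | (∃ γ ∈ Γ0, ∃ q : Fin m → ℚ, x = γ + ∑ i, q i • c i) ∧ x ≠ 0} \
        ψ '' {x | x ∈ Γ0 ∧ x ≠ 0}).Finite ∧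
    (ψ '' {x | (∃ γ ∈ Γ0, ∃ q : Fin m → ℚ, x = γ + ∑ i, q i • c i) ∧ x ≠ 0} \
        ψ '' {x | x ∈ Γ0 ∧ x ≠ 0}).ncard ≤ m := by
  have hset : {x : Γ | (∃ γ ∈ Γ0, ∃ q : Fin m → ℚ, x = γ + ∑ i, q i • c i) ∧ x ≠ 0} =
      {x | x ∈ Γ0 ⊔ Submodule.span ℚ (Set.range c) ∧ x ≠ 0} := by
    ext x
    simp only [Set.mem_setOf_eq, and_congr_left_iff]
    intro _
    constructor
    · rintro ⟨γ, hγ, q, rfl⟩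
      exact Submodule.add_mem_sup hγ (by
        rw [Submodule.mem_span_range_iff_exists_fun]; exact ⟨q, rfl⟩)
    · intro hx
      obtain ⟨γ, hγ, s, hs, rfl⟩ := Submodule.mem_sup.1 hx
      obtain ⟨q, rfl⟩ := (Submodule.mem_span_range_iff_exists_fun ℚ).1 hs
      exact ⟨γ, hγ, q, rfl⟩
  obtain ⟨v, hv⟩ := psi_ind_aux ψ hAC1 hAC2 Γ0 m c
  have hsub : ψ '' {x | (∃ γ ∈ Γ0, ∃ q : Fin m → ℚ, x = γ + ∑ i, q i • c i) ∧ x ≠ 0} \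
      ψ '' {x | x ∈ Γ0 ∧ x ≠ 0} ⊆ Set.range v := by
    rw [hset]
    intro y ⟨hy1, hy2⟩
    rcases hv hy1 with h | h
    · exact absurd h hy2
    · exact h
  have hfin : (Set.range v).Finite := Set.finite_range v
  refine ⟨hfin.subset hsub, ?_⟩
  calc (ψ '' {x | (∃ γ ∈ Γ0, ∃ q : Fin m → ℚ, x = γ + ∑ i, q i • c i) ∧ x ≠ 0} \
        ψ '' {x | x ∈ Γ0 ∧ x ≠ 0}).ncard
      ≤ (Set.range v).ncard := Set.ncard_le_ncard hsub hfin
    _ ≤ m := by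
        rw [← Set.image_univ]
        calc (v '' Set.univ).ncard ≤ (Set.univ : Set (Fin m)).ncard :=
              Set.ncard_image_le Set.finite_univ
          _ = m := by simp [Set.ncard_univ]
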